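/- Let G = ℚ/ℤ (as an additive group), let p_0 < p_1 < … enumerate the primes, and let K be the class of all subgroups of G. For choice sequences k̄ and k̄′: (1) if k̄ = k̄′ then dis(⟨k̄⟩,⟨k̄′⟩) = 0; (2) if k̄ ⪯ k̄′ and k̄ ≠ k̄′ then dis(⟨k̄⟩,⟨k̄′⟩) = 1; (3) if k̄ ≡ k̄′, k̄ ⋠ k̄′ and k̄′ ⋠ k̄, then dis(⟨k̄⟩,⟨k̄′⟩) = 2; (4) if k̄ ≢ k̄′ then dis(⟨k̄⟩,⟨k̄′⟩) = ∞. -/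

import Mathlib

namespace QZNetwork

/-- The group `ℚ/ℤ`. -/
abbrev QZ : Type := ℚ ⧸ AddSubgroup.zmultiples (1 : ℚ)

/-- The `i`-th prime number (in increasing order). -/
noncomputable def p (i : ℕ) : ℕ := Nat.nth Nat.Prime i

/-- The subgroup `⟨k̄⟩` of `ℚ/ℤ` determined by a choice sequence `k̄ : ℕ → ℕ∞`:
it is generated by the cosets `1/p_i^j + ℤ` for all `i, j ∈ ℕ` with `j ≤ k̄ i`. -/
noncomputable def gen (k : ℕ → ℕ∞) : AddSubgroup QZ :=
  AddSubgroup.closure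
    {x : QZ | ∃ i j : ℕ, (j : ℕ∞) ≤ k i ∧
      x = QuotientAddGroup.mk ((1 : ℚ) / (p i : ℚ) ^ j)}

/-- `k̄ ≡ k̄′`: the two choice sequences have the same `∞`-positions and differ at only
finitely many positions. -/
def ceq (k k' : ℕ → ℕ∞) : Prop :=
  (∀ i, k i = ⊤ ↔ k' i = ⊤) ∧ {i : ℕ | k i ≠ k' i}.Finite

/-- `k̄ ⪯ k̄′`: `k̄ ≡ k̄′` and `k̄` is pointwise at most `k̄′`. -/
def cle (k k' : ℕ → ℕ∞) : Prop := ceq k k' ∧ ∀ i, k i ≤ k' i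

/-- `A` is largely embeddable into `B` in the class of all subgroups of `ℚ/ℤ`:
some subgroup `C ≤ B` is isomorphic to `A` and, together with one extra element of
`B`, generates `B`. -/
def LargeEmb (A B : AddSubgroup QZ) : Prop :=
  ∃ C : AddSubgroup QZ, C ≤ B ∧ Nonempty (A ≃+ C) ∧
    ∃ b ∈ B, AddSubgroup.closure (↑C ∪ {b}) = B

/-- A path of length `n` between `A` and `B` in the network of large embeddings of the
class of all subgroups of `ℚ/ℤ`. -/
def HasPath (A B : AddSubgroup QZ) (n : ℕ) : Prop :=
  ∃ C : ℕ → AddSubgroup QZ, Nonempty ((C 0) ≃+ A) ∧ Nonempty ((C n) ≃+ B) ∧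
    ∀ i < n, LargeEmb (C i) (C (i + 1)) ∨ LargeEmb (C (i + 1)) (C i)

/-- The generator distance in the class of all subgroups of `ℚ/ℤ`, in `ℕ ∪ {∞}`. -/
noncomputable def dis (A B : AddSubgroup QZ) : ℕ∞ :=
  sInf {q : ℕ∞ | ∃ n : ℕ, q = (n : ℕ∞) ∧ HasPath A B n}




noncomputable def π : ℚ →+ QZ := QuotientAddGroup.mk' (AddSubgroup.zmultiples 1)

lemma pi_eq (q : ℚ) : π q = QuotientAddGroup.mk q := rfl

lemma pi_eq_zero_iff (q : ℚ) : π q = 0 ↔ ∃ m : ℤ, q = (m : ℚ) := by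
  rw [π, QuotientAddGroup.mk'_apply, QuotientAddGroup.eq_zero_iff]
  simp only [AddSubgroup.mem_zmultiples_iff, zsmul_one]
  exact ⟨fun ⟨m, h⟩ => ⟨m, h.symm⟩, fun ⟨m, h⟩ => ⟨m, h.symm⟩⟩

lemma pi_int (m : ℤ) : π (m : ℚ) = 0 := (pi_eq_zero_iff _).2 ⟨m, rfl⟩

lemma pi_eq_iff (a b : ℚ) : π a = π b ↔ ∃ m : ℤ, a - b = (m : ℚ) := by
  rw [← sub_eq_zero, ← map_sub, pi_eq_zero_iff]

lemma L1 (q : ℚ) (n : ℕ) : (∃ m : ℤ, (n : ℚ) * q = m) ↔ q.den ∣ n := by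
  have hd : (q.den : ℚ) ≠ 0 := Nat.cast_ne_zero.mpr q.den_nz
  have hq : (q.den : ℚ) * q = q.num := by
    rw [mul_comm]; exact Rat.mul_den_eq_num q
  constructor
  · rintro ⟨m, hm⟩
    have h2 : (n : ℚ) * q.num = m * q.den := by
      calc (n : ℚ) * q.num = (q.den : ℚ) * ((n:ℚ) * q) := by rw [← hq]; ring
      _ = m * q.den := by rw [hm]; ring
    have h1 : (n : ℤ) * q.num = m * q.den := by exact_mod_cast h2
    have h3 : (q.den : ℤ) ∣ (n : ℤ) * q.num := Dvd.intro_left m h1.symm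
    have h4 : q.den ∣ n * q.num.natAbs := by
      have := Int.natAbs_dvd_natAbs.mpr h3
      simpa [Int.natAbs_mul] using this
    exact (Nat.Coprime.dvd_of_dvd_mul_right q.reduced.symm h4)
  · rintro ⟨t, ht⟩
    refine ⟨t * q.num, ?_⟩
    subst ht
    push_cast
    linear_combination (t : ℚ) * hq

lemma nsmul_pi (n : ℕ) (q : ℚ) : n • π q = π ((n : ℚ) * q) := by
  rw [← map_nsmul]; congr 1

lemma zsmul_pi (n : ℤ) (q : ℚ) : n • π q = π ((n : ℚ) * q) := by
  rw [← map_zsmul]; congr 1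

lemma nsmul_pi_eq_zero_iff (n : ℕ) (q : ℚ) : n • π q = 0 ↔ q.den ∣ n := by
  rw [nsmul_pi, pi_eq_zero_iff, ← L1]

lemma finOrder_pi (q : ℚ) : IsOfFinAddOrder (π q) := by
  rw [isOfFinAddOrder_iff_nsmul_eq_zero]
  exact ⟨q.den, q.pos, (nsmul_pi_eq_zero_iff _ _).2 dvd_rfl⟩

lemma addOrderOf_pi (q : ℚ) : addOrderOf (π q) = q.den := by
  apply Nat.dvd_antisymm
  · exact addOrderOf_dvd_of_nsmul_eq_zero ((nsmul_pi_eq_zero_iff _ _).2 dvd_rfl)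
  · exact (nsmul_pi_eq_zero_iff _ _).1 (addOrderOf_nsmul_eq_zero (π q))

lemma finOrder_QZ (x : QZ) : IsOfFinAddOrder x := by
  obtain ⟨q, rfl⟩ := QuotientAddGroup.mk_surjective x
  exact finOrder_pi q

lemma den_add_dvd_lcm (a b : ℚ) : (a + b).den ∣ Nat.lcm a.den b.den := by
  rw [← L1]
  obtain ⟨m1, h1⟩ := (L1 a (Nat.lcm a.den b.den)).2 (Nat.dvd_lcm_left _ _)
  obtain ⟨m2, h2⟩ := (L1 b (Nat.lcm a.den b.den)).2 (Nat.dvd_lcm_right _ _)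
  exact ⟨m1 + m2, by push_cast; rw [mul_add, h1, h2]⟩

lemma p_prime (i : ℕ) : (p i).Prime := Nat.prime_nth_prime i
lemma p_inj : Function.Injective p := Nat.nth_injective Nat.infinite_setOf_prime
lemma p_pos (i : ℕ) : 0 < p i := (p_prime i).pos

/-- The defining predicate for membership in `gen k` (on rationals). -/
def Pred (k : ℕ → ℕ∞) (q : ℚ) : Prop := ∀ i j : ℕ, (p i) ^ j ∣ q.den → (j : ℕ∞) ≤ k i

lemma Pred_add {k : ℕ → ℕ∞} {a b : ℚ} (ha : Pred k a) (hb : Pred k b) : Pred k (a + b) := by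
  intro i j hdvd
  have h := hdvd.trans (den_add_dvd_lcm a b)
  have hla : a.den ≠ 0 := a.den_nz
  have hlb : b.den ≠ 0 := b.den_nz
  have hlcm : Nat.lcm a.den b.den ≠ 0 := Nat.lcm_ne_zero hla hlb
  rw [Nat.Prime.pow_dvd_iff_le_factorization (p_prime i) hlcm, Nat.factorization_lcm hla hlb] at h
  simp only [Finsupp.sup_apply, le_sup_iff] at h
  rcases h with h | h
  · exact ha i j ((Nat.Prime.pow_dvd_iff_le_factorization (p_prime i) hla).2 h)
  · exact hb i j ((Nat.Prime.pow_dvd_iff_le_factorization (p_prime i) hlb).2 h)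

lemma Pred_int (k : ℕ → ℕ∞) (m : ℤ) : Pred k (m : ℚ) := by
  intro i j hdvd
  rw [Rat.den_intCast] at hdvd
  have := Nat.le_of_dvd one_pos hdvd
  have h1 : j = 0 := by
    by_contra hj
    have := (p_prime i).two_le
    have : 2 ^ j ≤ (p i) ^ j := Nat.pow_le_pow_left this j
    have : 2 ^ j ≥ 2 := by
      calc 2 ^ j ≥ 2 ^ 1 := Nat.pow_le_pow_right (by norm_num) (Nat.one_le_iff_ne_zero.2 hj)
      _ = 2 := by norm_num
    omega
  simp [h1]

/-- The explicit description of `gen k` as a subgroup. -/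
noncomputable def S (k : ℕ → ℕ∞) : AddSubgroup QZ where
  carrier := {x | ∃ q : ℚ, Pred k q ∧ π q = x}
  zero_mem' := ⟨0, by simpa using Pred_int k 0, map_zero π⟩
  add_mem' := by
    rintro x y ⟨a, ha, rfl⟩ ⟨b, hb, rfl⟩
    exact ⟨a + b, Pred_add ha hb, map_add π a b⟩
  neg_mem' := by
    rintro x ⟨a, ha, rfl⟩
    refine ⟨-a, fun i j h => ha i j (by rwa [Rat.neg_den] at h), map_neg π a⟩

lemma den_unit_frac (i j : ℕ) : ((1 : ℚ) / (p i : ℚ) ^ j).den = p i ^ j := by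
  have h1 : (1 : ℚ) / (p i : ℚ) ^ j = ((p i ^ j : ℕ) : ℚ)⁻¹ := by
    push_cast; rw [one_div]
  rw [h1, Rat.inv_natCast_den_of_pos (pow_pos (p_pos i) j)]

lemma Pred_unit_frac {k : ℕ → ℕ∞} {i j : ℕ} (hj : (j : ℕ∞) ≤ k i) :
    Pred k ((1 : ℚ) / (p i : ℚ) ^ j) := by
  intro i' j' hdvd
  rw [den_unit_frac] at hdvd
  by_cases hii : i' = i
  · subst hii
    have : j' ≤ j := (Nat.pow_dvd_pow_iff_le_right (p_prime i').one_lt).1 hdvd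
    exact le_trans (by exact_mod_cast Nat.cast_le.2 this) hj
  · have hco : Nat.Coprime (p i' ^ j') (p i ^ j) :=
      Nat.Coprime.pow _ _ (((Nat.coprime_primes (p_prime i') (p_prime i)).2
        (fun h => hii (p_inj h))))
    have h1 : p i' ^ j' = 1 := Nat.eq_one_of_dvd_coprimes hco dvd_rfl hdvd
    have : j' = 0 := by
      by_contra hj'
      have h2 := (p_prime i').one_lt
      have : p i' ^ j' ≥ p i' ^ 1 := Nat.pow_le_pow_right (p_prime i').pos
        (Nat.one_le_iff_ne_zero.2 hj')
      simp at this; omega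
    simp [this]

lemma gen_le_S (k : ℕ → ℕ∞) : gen k ≤ S k := by
  rw [gen, AddSubgroup.closure_le]
  rintro x ⟨i, j, hj, rfl⟩
  exact ⟨(1 : ℚ) / (p i : ℚ) ^ j, Pred_unit_frac hj, rfl⟩


/-- `A` has an element of order `p i ^ j`. -/
def EE (A : AddSubgroup QZ) (i j : ℕ) : Prop := ∃ x ∈ A, addOrderOf x = p i ^ j

lemma EE_mono {A B : AddSubgroup QZ} (h : A ≤ B) {i j : ℕ} (he : EE A i j) : EE B i j := by
  obtain ⟨x, hx, hord⟩ := he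
  exact ⟨x, h hx, hord⟩

lemma EE_iso {A B : AddSubgroup QZ} (e : A ≃+ B) (i j : ℕ) : EE A i j ↔ EE B i j := by
  constructor
  · rintro ⟨x, hx, hord⟩
    refine ⟨(e ⟨x, hx⟩ : B), (e ⟨x, hx⟩).2, ?_⟩
    rw [AddSubgroup.addOrderOf_coe, AddEquiv.addOrderOf_eq, AddSubgroup.addOrderOf_mk, hord]
  · rintro ⟨x, hx, hord⟩
    refine ⟨(e.symm ⟨x, hx⟩ : A), (e.symm ⟨x, hx⟩).2, ?_⟩
    rw [AddSubgroup.addOrderOf_coe, AddEquiv.addOrderOf_eq, AddSubgroup.addOrderOf_mk, hord]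

lemma EE_downward {A : AddSubgroup QZ} {i j j' : ℕ} (he : EE A i j) (hj : j' ≤ j) :
    EE A i j' := by
  obtain ⟨x, hx, hord⟩ := he
  refine ⟨(p i) ^ (j - j') • x, AddSubgroup.nsmul_mem A hx _, ?_⟩
  rw [(finOrder_QZ x).addOrderOf_nsmul, hord]
  have h1 : (p i) ^ (j - j') ∣ (p i) ^ j := pow_dvd_pow _ (Nat.sub_le j j')
  rw [Nat.gcd_eq_right h1, Nat.pow_div (Nat.sub_le j j') (p_prime i).pos, Nat.sub_sub_self hj]

/-- The key quotient bound. -/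
lemma EE_of_sup {C : AddSubgroup QZ} {b : QZ} {i j : ℕ}
    (hx : EE (C ⊔ AddSubgroup.zmultiples b) i j) :
    EE C i (j - (addOrderOf b).factorization (p i)) := by
  obtain ⟨x, hmem, hord⟩ := hx
  rw [AddSubgroup.mem_sup] at hmem
  obtain ⟨c, hc, z, hz, hsum⟩ := hmem
  rw [AddSubgroup.mem_zmultiples_iff] at hz
  obtain ⟨n, rfl⟩ := hz
  set N := addOrderOf b with hN
  have hN0 : N ≠ 0 := (finOrder_QZ b).addOrderOf_pos.ne'
  set m := N.factorization (p i) with hm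
  have hNb : N • b = 0 := addOrderOf_nsmul_eq_zero b
  have hNx : N • x = N • c := by
    rw [← hsum, smul_add]
    have h1 : N • (n • b) = n • (N • b) := by
      rw [← natCast_zsmul (n • b) N, smul_comm, natCast_zsmul]
    rw [h1, hNb, smul_zero, add_zero]
  refine ⟨N • c, AddSubgroup.nsmul_mem C hc _, ?_⟩
  rw [← hNx, (finOrder_QZ x).addOrderOf_nsmul, hord]
  -- compute gcd (p i ^ j) N
  have hpj0 : p i ^ j ≠ 0 := (pow_pos (p_prime i).pos j).ne'
  have hg0 : Nat.gcd (p i ^ j) N ≠ 0 := Nat.gcd_ne_zero_left hpj0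
  obtain ⟨t, ht, hgt⟩ := (Nat.dvd_prime_pow (p_prime i)).1 (Nat.gcd_dvd_left (p i ^ j) N)
  have htval : t = min j m := by
    have h2 : (Nat.gcd (p i ^ j) N).factorization (p i) = min j m := by
      rw [Nat.factorization_gcd hpj0 hN0]
      simp [Nat.Prime.factorization_pow (p_prime i), hm]
    rw [hgt] at h2
    simpa [Nat.Prime.factorization_pow (p_prime i)] using h2
  rw [hgt, htval, Nat.pow_div (min_le_left j m) (p_prime i).pos]
  congr 1
  omega

/-- The invariant equivalence on subgroups of `ℚ/ℤ`. -/
def Req (A B : AddSubgroup QZ) : Prop :=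
  (∀ i, (∀ j, EE A i j) ↔ (∀ j, EE B i j)) ∧
  {i : ℕ | ∃ j, ¬ (EE A i j ↔ EE B i j)}.Finite

lemma Req_refl (A : AddSubgroup QZ) : Req A A :=
  ⟨fun _ => Iff.rfl, Set.Finite.subset (Set.finite_empty) (by simp)⟩

lemma Req_symm {A B : AddSubgroup QZ} (h : Req A B) : Req B A := by
  refine ⟨fun i => (h.1 i).symm, h.2.subset ?_⟩
  intro i hi
  obtain ⟨j, hj⟩ := hi
  exact ⟨j, fun h' => hj h'.symm⟩

lemma Req_trans {A B C : AddSubgroup QZ} (h1 : Req A B) (h2 : Req B C) : Req A C := by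
  refine ⟨fun i => (h1.1 i).trans (h2.1 i), (h1.2.union h2.2).subset ?_⟩
  intro i hi
  obtain ⟨j, hj⟩ := hi
  by_contra hcon
  simp only [Set.mem_union, Set.mem_setOf_eq, not_or, not_exists, not_not] at hcon
  exact hj ((hcon.1 j).trans (hcon.2 j))

lemma Req_of_iso {A B : AddSubgroup QZ} (e : A ≃+ B) : Req A B :=
  ⟨fun i => forall_congr' (fun j => EE_iso e i j),
    Set.Finite.subset (Set.finite_empty) (by simp [EE_iso e])⟩

lemma Req_of_le_sup {C : AddSubgroup QZ} (b : QZ) :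
    Req C (C ⊔ AddSubgroup.zmultiples b) := by
  set B := C ⊔ AddSubgroup.zmultiples b with hB
  set N := addOrderOf b with hN
  have hN0 : N ≠ 0 := (finOrder_QZ b).addOrderOf_pos.ne'
  have hle : C ≤ B := le_sup_left
  constructor
  · intro i
    constructor
    · exact fun h j => EE_mono hle (h j)
    · intro h j
      have := EE_of_sup (C := C) (b := b) (h (j + N.factorization (p i)))
      rw [← hN, Nat.add_sub_cancel] at this
      exact this
  · have hsub : {i : ℕ | ∃ j, ¬ (EE C i j ↔ EE B i j)} ⊆ {i : ℕ | p i ∣ N} := by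
      intro i hi
      obtain ⟨j, hj⟩ := hi
      by_contra hdvd
      have hm : N.factorization (p i) = 0 := Nat.factorization_eq_zero_of_not_dvd hdvd
      refine hj ⟨fun h => EE_mono hle h, fun h => ?_⟩
      have := EE_of_sup (C := C) (b := b) h
      rwa [hm, Nat.sub_zero] at this
    refine Set.Finite.subset ?_ hsub
    have : {i : ℕ | p i ∣ N} ⊆ p ⁻¹' {d : ℕ | d ∣ N} := fun i hi => hi
    refine Set.Finite.subset (Set.Finite.preimage p_inj.injOn ?_) this
    exact (Set.finite_Icc 0 N).subset (fun d hd => ⟨Nat.zero_le d, Nat.le_of_dvd (Nat.pos_of_ne_zero hN0) hd⟩)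


lemma closure_insert_eq (C : AddSubgroup QZ) (b : QZ) :
    AddSubgroup.closure (↑C ∪ {b}) = C ⊔ AddSubgroup.zmultiples b := by
  rw [AddSubgroup.closure_union, AddSubgroup.closure_eq, ← AddSubgroup.zmultiples_eq_closure]

lemma Req_of_largeEmb {A B : AddSubgroup QZ} (h : LargeEmb A B) : Req A B := by
  obtain ⟨C, hle, ⟨e⟩, b, hb, hcl⟩ := h
  have h1 : Req A C := Req_of_iso e
  have h2 : Req C B := by
    rw [← hcl, closure_insert_eq]
    exact Req_of_le_sup b
  exact Req_trans h1 h2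

lemma Req_of_hasPath {A B : AddSubgroup QZ} {n : ℕ} (h : HasPath A B n) : Req A B := by
  obtain ⟨C, ⟨e0⟩, ⟨en⟩, hstep⟩ := h
  have key : ∀ m ≤ n, Req (C 0) (C m) := by
    intro m hm
    induction m with
    | zero => exact Req_refl _
    | succ t ih =>
      have ht : t < n := Nat.lt_of_succ_le hm
      have h1 := ih (le_of_lt ht)
      rcases hstep t ht with hl | hl
      · exact Req_trans h1 (Req_of_largeEmb hl)
      · exact Req_trans h1 (Req_symm (Req_of_largeEmb hl))
  exact Req_trans (Req_trans (Req_symm (Req_of_iso e0)) (key n le_rfl)) (Req_of_iso en)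

lemma EE_gen (k : ℕ → ℕ∞) (i j : ℕ) : EE (gen k) i j ↔ (j : ℕ∞) ≤ k i := by
  constructor
  · rintro ⟨x, hx, hord⟩
    obtain ⟨q, hq, rfl⟩ := gen_le_S k hx
    rw [addOrderOf_pi] at hord
    exact hq i j (hord ▸ dvd_rfl)
  · intro hj
    refine ⟨π ((1 : ℚ) / (p i : ℚ) ^ j), ?_, ?_⟩
    · exact AddSubgroup.subset_closure ⟨i, j, hj, rfl⟩
    · rw [addOrderOf_pi, den_unit_frac]

-- ℕ∞ helpers
lemma enat_le_of_forall {a b : ℕ∞} (h : ∀ j : ℕ, (j : ℕ∞) ≤ a → (j : ℕ∞) ≤ b) : a ≤ b := by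
  induction a using ENat.recTopCoe with
  | top =>
    induction b using ENat.recTopCoe with
    | top => exact le_rfl
    | coe m =>
      have := h (m + 1) le_top
      rw [Nat.cast_le] at this
      omega
  | coe n => exact h n le_rfl

lemma enat_eq_of_forall {a b : ℕ∞} (h : ∀ j : ℕ, (j : ℕ∞) ≤ a ↔ (j : ℕ∞) ≤ b) : a = b :=
  le_antisymm (enat_le_of_forall fun j hj => (h j).1 hj)
    (enat_le_of_forall fun j hj => (h j).2 hj)

lemma enat_top_iff_forall {a : ℕ∞} : a = ⊤ ↔ ∀ j : ℕ, (j : ℕ∞) ≤ a := by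
  constructor
  · rintro rfl j; exact le_top
  · intro h
    induction a using ENat.recTopCoe with
    | top => rfl
    | coe n =>
      have := h (n + 1)
      rw [Nat.cast_le] at this
      omega


lemma ceq_of_req {k k' : ℕ → ℕ∞} (h : Req (gen k) (gen k')) : ceq k k' := by
  constructor
  · intro i
    rw [enat_top_iff_forall, enat_top_iff_forall]
    have := h.1 i
    simp only [EE_gen] at this
    exact this
  · refine h.2.subset ?_
    intro i hi
    simp only [Set.mem_setOf_eq] at hi ⊢
    by_contra hcon
    simp only [not_exists, not_not, EE_gen] at hcon
    exact hi (enat_eq_of_forall hcon)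

lemma eq_of_iso {k k' : ℕ → ℕ∞} (e : gen k ≃+ gen k') : k = k' := by
  funext i
  apply enat_eq_of_forall
  intro j
  rw [← EE_gen, ← EE_gen, EE_iso e]

lemma le_of_le_mono {k k' : ℕ → ℕ∞} (h : ∀ i j, EE (gen k) i j → EE (gen k') i j) :
    ∀ i, k i ≤ k' i := by
  intro i
  apply enat_le_of_forall
  intro j hj
  rw [← EE_gen]
  exact h i j ((EE_gen k i j).2 hj)

lemma pi_nat (c : ℕ) : π (c : ℚ) = 0 := by
  have := pi_int (c : ℤ)
  push_cast at this
  exact this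

lemma gen_mono {k k' : ℕ → ℕ∞} (h : ∀ i, k i ≤ k' i) : gen k ≤ gen k' := by
  rw [gen, AddSubgroup.closure_le]
  rintro x ⟨i, j, hj, rfl⟩
  exact AddSubgroup.subset_closure ⟨i, j, le_trans hj (h i), rfl⟩

lemma g_mem {k : ℕ → ℕ∞} {i j : ℕ} (hj : (j : ℕ∞) ≤ k i) :
    π ((1 : ℚ) / (p i : ℚ) ^ j) ∈ gen k :=
  AddSubgroup.subset_closure ⟨i, j, hj, rfl⟩

lemma smul_unit_frac {i j e : ℕ} (hje : j ≤ e) :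
    (p i) ^ (e - j) • π ((1 : ℚ) / (p i : ℚ) ^ e) = π ((1 : ℚ) / (p i : ℚ) ^ j) := by
  rw [nsmul_pi]
  congr 1
  have hp : (p i : ℚ) ≠ 0 := Nat.cast_ne_zero.2 (p_pos i).ne'
  push_cast
  field_simp
  rw [← pow_add]
  congr 1
  omega

lemma largeEmb_of_cle {k k' : ℕ → ℕ∞} (h : cle k k') : LargeEmb (gen k) (gen k') := by
  obtain ⟨⟨htop, hfin⟩, hle⟩ := h
  classical
  set F := hfin.toFinset with hF
  set e : ℕ → ℕ := fun i => (k' i).toNat with he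
  have hek' : ∀ i ∈ F, (e i : ℕ∞) = k' i := by
    intro i hi
    have hne : k' i ≠ ⊤ := by
      intro htop'
      rw [hF, Set.Finite.mem_toFinset] at hi
      exact hi (by rw [(htop i).2 htop', htop'])
    exact ENat.coe_toNat hne
  set b : QZ := ∑ i ∈ F, π ((1 : ℚ) / (p i : ℚ) ^ (e i)) with hb
  have hbmem : b ∈ gen k' := by
    refine AddSubgroup.sum_mem _ (fun i hi => g_mem ?_)
    rw [hek' i hi]
  refine ⟨gen k, gen_mono hle, ⟨AddEquiv.refl _⟩, b, hbmem, ?_⟩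
  set D := AddSubgroup.closure ((gen k : Set QZ) ∪ {b}) with hD
  have hbD : b ∈ D := AddSubgroup.subset_closure (Or.inr rfl)
  have hgkD : gen k ≤ D := by
    intro x hx
    exact AddSubgroup.subset_closure (Or.inl hx)
  -- key: for i ∈ F, π (1/p i ^ e i) ∈ D
  have hkey : ∀ i ∈ F, π ((1 : ℚ) / (p i : ℚ) ^ (e i)) ∈ D := by
    intro i hi
    set M : ℕ := ∏ i' ∈ F.erase i, p i' ^ (e i') with hM
    have hpe : ((p i : ℚ) ^ (e i)) ≠ 0 := pow_ne_zero _ (Nat.cast_ne_zero.2 (p_pos i).ne')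
    have hMb : M • b = π ((M : ℚ) * ((1 : ℚ) / (p i : ℚ) ^ (e i))) := by
      rw [hb, Finset.smul_sum]
      rw [Finset.sum_eq_single_of_mem i hi]
      · rw [nsmul_pi]
      · intro i' hi' hne
        rw [nsmul_pi]
        have hdvd : p i' ^ (e i') ∣ M := Finset.dvd_prod_of_mem _ (Finset.mem_erase.2 ⟨hne, hi'⟩)
        obtain ⟨c, hc⟩ := hdvd
        have : (M : ℚ) * ((1 : ℚ) / (p i' : ℚ) ^ (e i')) = (c : ℚ) := by
          have hp' : ((p i' : ℚ) ^ (e i')) ≠ 0 := pow_ne_zero _ (Nat.cast_ne_zero.2 (p_pos i').ne')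
          rw [hc]
          push_cast
          field_simp
        rw [this, pi_nat]
    have hcop : Nat.Coprime M (p i ^ (e i)) := by
      apply Nat.Coprime.prod_left
      intro i' hi'
      have hne : p i' ≠ p i := fun hh => (Finset.mem_erase.1 hi').1 (p_inj hh)
      exact Nat.Coprime.pow _ _ ((Nat.coprime_primes (p_prime i') (p_prime i)).2 hne)
    have hiscop : IsCoprime (M : ℤ) ((p i ^ (e i) : ℕ) : ℤ) := by
      rw [Nat.isCoprime_iff_coprime]
      exact hcop
    obtain ⟨u, v, huv⟩ := hiscop
    have hfinal : π ((1 : ℚ) / (p i : ℚ) ^ (e i)) = u • (M • b) := by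
      rw [hMb, zsmul_pi, pi_eq_iff]
      refine ⟨v, ?_⟩
      have hQ : (u : ℚ) * M + v * ((p i : ℚ) ^ (e i)) = 1 := by
        have := huv
        push_cast at this ⊢
        exact_mod_cast this
      push_cast
      have h2 : 1 - (u : ℚ) * M = (v : ℚ) * ((p i : ℚ) ^ (e i)) := by linarith
      calc 1 / (p i : ℚ) ^ (e i) - (u : ℚ) * ((M : ℚ) * (1 / (p i : ℚ) ^ (e i)))
          = (1 - (u : ℚ) * M) / ((p i : ℚ) ^ (e i)) := by ring
        _ = ((v : ℚ) * ((p i : ℚ) ^ (e i))) / ((p i : ℚ) ^ (e i)) := by rw [h2]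
        _ = (v : ℚ) := by field_simp
    rw [hfinal]
    exact AddSubgroup.zsmul_mem D (AddSubgroup.nsmul_mem D hbD M) u
  apply le_antisymm
  · rw [hD, AddSubgroup.closure_le]
    exact Set.union_subset (gen_mono hle) (Set.singleton_subset_iff.2 hbmem)
  · rw [gen, AddSubgroup.closure_le]
    rintro x ⟨i, j, hj, rfl⟩
    by_cases hiF : i ∈ F
    · have hje : j ≤ e i := by
        rw [← Nat.cast_le (α := ℕ∞), hek' i hiF]
        exact hj
      rw [show (QuotientAddGroup.mk ((1:ℚ) / (p i : ℚ) ^ j) : QZ) = π ((1:ℚ) / (p i : ℚ) ^ j) from rfl,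
        ← smul_unit_frac hje]
      exact AddSubgroup.nsmul_mem D (hkey i hiF) _
    · have : k i = k' i := by
        rw [hF, Set.Finite.mem_toFinset] at hiF
        simpa using hiF
      exact hgkD (AddSubgroup.subset_closure ⟨i, j, by rw [this]; exact hj, rfl⟩)


lemma ceq_symm {k k' : ℕ → ℕ∞} (h : ceq k k') : ceq k' k := by
  refine ⟨fun i => (h.1 i).symm, ?_⟩
  have : {i : ℕ | k' i ≠ k i} = {i : ℕ | k i ≠ k' i} := by
    ext i; simp [ne_comm]
  rw [this]; exact h.2

lemma hasPath_zero_eq {k k' : ℕ → ℕ∞} (h : HasPath (gen k) (gen k') 0) : k = k' := by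
  obtain ⟨C, ⟨e0⟩, ⟨e1⟩, _⟩ := h
  exact eq_of_iso (e0.symm.trans e1)

lemma hasPath_one_le {k k' : ℕ → ℕ∞} (hceq : ceq k k') (h : HasPath (gen k) (gen k') 1) :
    cle k k' ∨ cle k' k := by
  obtain ⟨C, ⟨e0⟩, ⟨e1⟩, hstep⟩ := h
  rcases hstep 0 one_pos with hl | hl
  · obtain ⟨Csub, hle, ⟨eiso⟩, _⟩ := hl
    left
    refine ⟨hceq, le_of_le_mono ?_⟩
    intro i j hj
    rw [← EE_iso e1]
    refine EE_mono hle ?_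
    rw [← EE_iso eiso, EE_iso e0]
    exact hj
  · obtain ⟨Csub, hle, ⟨eiso⟩, _⟩ := hl
    right
    refine ⟨ceq_symm hceq, le_of_le_mono ?_⟩
    intro i j hj
    rw [← EE_iso e0]
    refine EE_mono hle ?_
    rw [← EE_iso eiso, EE_iso e1]
    exact hj

theorem main (k k' : ℕ → ℕ∞) :
    (k = k' → dis (gen k) (gen k') = 0) ∧
    (cle k k' → k ≠ k' → dis (gen k) (gen k') = 1) ∧
    (ceq k k' → ¬ cle k k' → ¬ cle k' k → dis (gen k) (gen k') = 2) ∧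
    (¬ ceq k k' → dis (gen k) (gen k') = ⊤) := by
  refine ⟨?_, ?_, ?_, ?_⟩
  · rintro rfl
    have h0 : HasPath (gen k) (gen k) 0 :=
      ⟨fun _ => gen k, ⟨AddEquiv.refl _⟩, ⟨AddEquiv.refl _⟩, fun i hi => absurd hi (Nat.not_lt_zero i)⟩
    exact le_antisymm (sInf_le ⟨0, by norm_num, h0⟩) zero_le
  · intro hcle hne
    set C : ℕ → AddSubgroup QZ := fun t => if t = 0 then gen k else gen k' with hC
    have h0 : C 0 = gen k := if_pos rfl
    have h1 : C 1 = gen k' := if_neg one_ne_zero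
    have hpath : HasPath (gen k) (gen k') 1 := by
      refine ⟨C, ⟨AddEquiv.addSubgroupCongr h0⟩, ⟨AddEquiv.addSubgroupCongr h1⟩, ?_⟩
      intro i hi
      interval_cases i
      rw [h0, h1]
      exact Or.inl (largeEmb_of_cle hcle)
    apply le_antisymm
    · exact sInf_le ⟨1, by norm_num, hpath⟩
    · refine le_sInf ?_
      rintro q ⟨n, rfl, hp⟩
      have hn : n ≠ 0 := by
        rintro rfl
        exact hne (hasPath_zero_eq hp)
      exact_mod_cast Nat.one_le_iff_ne_zero.2 hn
  · intro hceq hnle hnle'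
    set K : ℕ → ℕ∞ := fun i => k i ⊔ k' i with hK
    have hceqK : ceq k K := by
      refine ⟨fun i => ?_, ?_⟩
      · rw [hK]
        simp only [max_eq_top]
        constructor
        · exact fun h => Or.inl h
        · rintro (h | h)
          · exact h
          · exact (hceq.1 i).2 h
      · refine hceq.2.subset ?_
        intro i hi
        simp only [Set.mem_setOf_eq] at hi ⊢
        intro hcon
        exact hi (by rw [hK]; simp [hcon])
    have hceqK' : ceq k' K := by
      refine ⟨fun i => ?_, ?_⟩
      · rw [hK]
        simp only [max_eq_top]
        constructor
        · exact fun h => Or.inr h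
        · rintro (h | h)
          · exact (hceq.1 i).1 h
          · exact h
      · refine (ceq_symm hceq).2.subset ?_
        intro i hi
        simp only [Set.mem_setOf_eq] at hi ⊢
        intro hcon
        exact hi (by rw [hK]; simp [hcon])
    have hcleK : cle k K := ⟨hceqK, fun i => le_sup_left⟩
    have hcleK' : cle k' K := ⟨hceqK', fun i => le_sup_right⟩
    set C : ℕ → AddSubgroup QZ := fun t => if t = 0 then gen k else if t = 1 then gen K else gen k' with hC
    have h0 : C 0 = gen k := rfl
    have h1 : C 1 = gen K := rfl
    have h2 : C 2 = gen k' := rfl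
    have hpath : HasPath (gen k) (gen k') 2 := by
      refine ⟨C, ⟨AddEquiv.addSubgroupCongr h0⟩, ⟨AddEquiv.addSubgroupCongr h2⟩, ?_⟩
      intro i hi
      interval_cases i
      · rw [h0, h1]
        exact Or.inl (largeEmb_of_cle hcleK)
      · rw [h1, h2]
        exact Or.inr (largeEmb_of_cle hcleK')
    apply le_antisymm
    · exact sInf_le ⟨2, by norm_num, hpath⟩
    · refine le_sInf ?_
      rintro q ⟨n, rfl, hp⟩
      have hn0 : n ≠ 0 := by
        rintro rfl
        exact hnle ⟨hceq, fun i => le_of_eq (congrFun (hasPath_zero_eq hp) i)⟩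
      have hn1 : n ≠ 1 := by
        rintro rfl
        rcases hasPath_one_le hceq hp with h | h
        · exact hnle h
        · exact hnle' h
      exact_mod_cast by omega
  · intro hnceq
    have hempty : {q : ℕ∞ | ∃ n : ℕ, q = (n : ℕ∞) ∧ HasPath (gen k) (gen k') n} = ∅ := by
      rw [Set.eq_empty_iff_forall_notMem]
      rintro q ⟨n, rfl, hp⟩
      exact hnceq (ceq_of_req (Req_of_hasPath hp))
    rw [dis, hempty, sInf_empty]

end QZNetwork

open QZNetwork in
/-- for choice sequences `k̄, k̄′`:
(1) if `k̄ = k̄′` then `dis ⟨k̄⟩ ⟨k̄′⟩ = 0`;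
(2) if `k̄ ⪯ k̄′` and `k̄ ≠ k̄′` then `dis ⟨k̄⟩ ⟨k̄′⟩ = 1`;
(3) if `k̄ ≡ k̄′`, `k̄ ⋠ k̄′` and `k̄′ ⋠ k̄` then `dis ⟨k̄⟩ ⟨k̄′⟩ = 2`;
(4) if `k̄ ≢ k̄′` then `dis ⟨k̄⟩ ⟨k̄′⟩ = ∞`. -/
theorem dis_subgroups_of_QZ (k k' : ℕ → ℕ∞) :
    (k = k' → dis (gen k) (gen k') = 0) ∧
    (cle k k' → k ≠ k' → dis (gen k) (gen k') = 1) ∧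
    (ceq k k' → ¬ cle k k' → ¬ cle k' k → dis (gen k) (gen k') = 2) ∧
    (¬ ceq k k' → dis (gen k) (gen k') = ⊤) :=
  QZNetwork.main k k'
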